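/- For a sequence (X_n) adapted to a filtration G = (G_n)_{n≥0}, the following are equivalent: (i) (X_n) is G-c.i.d., i.e., E[f(X_{n+k}) | G_n] = E[f(X_{n+1}) | G_n] a.s. for all k ≥ 1, n ≥ 0 and bounded measurable f; (ii) for every bounded measurable f, the process (E[f(X_{n+1}) | G_n])_{n≥0} is a G-martingale; (iii) for every finite G-stopping time τ, X_{τ+1} has the same distribution as X_1. -/

import Mathlib

open MeasureTheory ProbabilityTheory Filter
open scoped ENNReal NNReal Topology

section CidAux

variable {Ω E : Type*} {mΩ : MeasurableSpace Ω} [MeasurableSpace E]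
  {P : Measure Ω} [IsProbabilityMeasure P] {ℱ : Filtration ℕ mΩ} {X : ℕ → Ω → E}

lemma cid_aux_measX (hadapt : ∀ n, Measurable[ℱ (n + 1)] (X n)) (n : ℕ) :
    Measurable (X n) := (hadapt n).mono (ℱ.le (n + 1)) le_rfl

lemma cid_aux_int (hadapt : ∀ n, Measurable[ℱ (n + 1)] (X n))
    {f : E → ℝ} (hf : Measurable f) {C : ℝ} (hC : ∀ x, |f x| ≤ C) (n : ℕ) :
    Integrable (fun ω => f (X n ω)) P := by
  refine Integrable.mono' (integrable_const C)
    ((hf.comp (cid_aux_measX hadapt n)).aestronglyMeasurable) ?_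
  exact Filter.Eventually.of_forall fun ω => by
    simpa [Real.norm_eq_abs] using hC (X n ω)

lemma cid_aux_stopped_meas (hadapt : ∀ n, Measurable[ℱ (n + 1)] (X n))
    {τ : Ω → ℕ} (hτ : Measurable τ) : Measurable fun ω => X (τ ω) ω := by
  intro t ht
  have hset : (fun ω => X (τ ω) ω) ⁻¹' t = ⋃ n, ((τ ⁻¹' {n}) ∩ X n ⁻¹' t) := by
    ext ω
    simp only [Set.mem_preimage, Set.mem_iUnion, Set.mem_inter_iff, Set.mem_singleton_iff]
    exact ⟨fun h => ⟨τ ω, rfl, h⟩, fun ⟨n, hn, h⟩ => by rw [hn]; exact h⟩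
  rw [hset]
  exact MeasurableSet.iUnion fun n =>
    (hτ (measurableSet_singleton n)).inter (cid_aux_measX hadapt n ht)

/-- Condition (i) implies condition (ii). -/
lemma cid_to_mg (hadapt : ∀ n, Measurable[ℱ (n + 1)] (X n))
    (h : ∀ (n k : ℕ) (f : E → ℝ), Measurable f → (∃ C, ∀ x, |f x| ≤ C) →
        P[(fun ω => f (X (n + k) ω)) | ℱ n] =ᵐ[P] P[(fun ω => f (X n ω)) | ℱ n])
    {f : E → ℝ} (hf : Measurable f) (hC : ∃ C, ∀ x, |f x| ≤ C) :
    Martingale (fun n => P[(fun ω => f (X n ω)) | ℱ n]) ℱ P := by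
  constructor
  · exact fun n => stronglyMeasurable_condExp
  · intro i j hij
    calc P[P[(fun ω => f (X j ω)) | ℱ j] | ℱ i]
        =ᵐ[P] P[(fun ω => f (X j ω)) | ℱ i] :=
          condExp_condExp_of_le (ℱ.mono hij) (ℱ.le j)
      _ =ᵐ[P] P[(fun ω => f (X i ω)) | ℱ i] := by
          have := h i (j - i) f hf hC
          rwa [Nat.add_sub_cancel' hij] at this

/-- Condition (ii) implies condition (i). -/
lemma mg_to_cid (hadapt : ∀ n, Measurable[ℱ (n + 1)] (X n))
    (h : ∀ f : E → ℝ, Measurable f → (∃ C, ∀ x, |f x| ≤ C) →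
        Martingale (fun n => P[(fun ω => f (X n ω)) | ℱ n]) ℱ P) :
    ∀ (n k : ℕ) (f : E → ℝ), Measurable f → (∃ C, ∀ x, |f x| ≤ C) →
        P[(fun ω => f (X (n + k) ω)) | ℱ n] =ᵐ[P] P[(fun ω => f (X n ω)) | ℱ n] := by
  intro n k f hf hC
  have hmg := h f hf hC
  calc P[(fun ω => f (X (n + k) ω)) | ℱ n]
      =ᵐ[P] P[P[(fun ω => f (X (n + k) ω)) | ℱ (n + k)] | ℱ n] :=
        (condExp_condExp_of_le (ℱ.mono (Nat.le_add_right n k)) (ℱ.le (n + k))).symm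
    _ =ᵐ[P] P[(fun ω => f (X n ω)) | ℱ n] := hmg.condExp_ae_eq (Nat.le_add_right n k)

/-- The one-step version of (i) implies the full version. -/
lemma step_to_cid (hadapt : ∀ n, Measurable[ℱ (n + 1)] (X n))
    (h : ∀ (n : ℕ) (f : E → ℝ), Measurable f → (∃ C, ∀ x, |f x| ≤ C) →
        P[(fun ω => f (X (n + 1) ω)) | ℱ n] =ᵐ[P] P[(fun ω => f (X n ω)) | ℱ n]) :
    ∀ (n k : ℕ) (f : E → ℝ), Measurable f → (∃ C, ∀ x, |f x| ≤ C) →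
        P[(fun ω => f (X (n + k) ω)) | ℱ n] =ᵐ[P] P[(fun ω => f (X n ω)) | ℱ n] := by
  intro n k f hf hC
  induction k with
  | zero => exact Filter.EventuallyEq.rfl
  | succ k ih =>
    calc P[(fun ω => f (X (n + (k + 1)) ω)) | ℱ n]
        =ᵐ[P] P[P[(fun ω => f (X ((n + k) + 1) ω)) | ℱ (n + k)] | ℱ n] :=
          (condExp_condExp_of_le (ℱ.mono (Nat.le_add_right n k)) (ℱ.le (n + k))).symm
      _ =ᵐ[P] P[P[(fun ω => f (X (n + k) ω)) | ℱ (n + k)] | ℱ n] :=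
          condExp_congr_ae (h (n + k) f hf hC)
      _ =ᵐ[P] P[(fun ω => f (X (n + k) ω)) | ℱ n] :=
          condExp_condExp_of_le (ℱ.mono (Nat.le_add_right n k)) (ℱ.le (n + k))
      _ =ᵐ[P] P[(fun ω => f (X n ω)) | ℱ n] := ih

/-- Under (ii), `E[f(X_τ)] = E[f(X_0)]` for every stopping time `τ`. -/
lemma mg_int_stopped (hadapt : ∀ n, Measurable[ℱ (n + 1)] (X n))
    (h : ∀ f : E → ℝ, Measurable f → (∃ C, ∀ x, |f x| ≤ C) →
        Martingale (fun n => P[(fun ω => f (X n ω)) | ℱ n]) ℱ P)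
    {f : E → ℝ} (hf : Measurable f) {C : ℝ} (hC : ∀ x, |f x| ≤ C)
    {τ : Ω → ℕ} (hτ : IsStoppingTime ℱ (fun ω => (τ ω : WithTop ℕ))) :
    ∫ ω, f (X (τ ω) ω) ∂P = ∫ ω, f (X 0 ω) ∂P := by
  have hXm := cid_aux_measX hadapt
  have hint : ∀ n, Integrable (fun ω => f (X n ω)) P := cid_aux_int hadapt hf hC
  have hmg := h f hf ⟨C, hC⟩
  -- the bounded case
  have key : ∀ (σ : Ω → ℕ), IsStoppingTime ℱ (fun ω => (σ ω : WithTop ℕ)) → ∀ N, (∀ ω, σ ω ≤ N) →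
      ∫ ω, f (X (σ ω) ω) ∂P = ∫ ω, f (X N ω) ∂P := by
    intro σ hσ N hσN
    have hset : ∀ n, MeasurableSet[ℱ n] {ω | σ ω = n} := fun n => by simpa using hσ.measurableSet_eq n
    have hsetm : ∀ n, MeasurableSet {ω | σ ω = n} := fun n => ℱ.le n _ (hset n)
    have hsum : ∀ (g : ℕ → Ω → ℝ) (ω : Ω),
        ∑ n ∈ Finset.range (N + 1),
          Set.indicator {ω' | σ ω' = n} (g n) ω = g (σ ω) ω := by
      intro g ω
      rw [Finset.sum_eq_single (σ ω)]
      · exact Set.indicator_of_mem (show ω ∈ {ω' | σ ω' = σ ω} from rfl) (g (σ ω))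
      · intro n _ hne
        exact Set.indicator_of_notMem (fun h => hne ((Set.mem_setOf_eq ▸ h).symm)) (g n)
      · intro hmem
        exact absurd (Finset.mem_range.mpr (Nat.lt_succ_of_le (hσN ω))) hmem
    have hterm : ∀ n ∈ Finset.range (N + 1),
        ∫ ω in {ω' | σ ω' = n}, f (X n ω) ∂P
          = ∫ ω in {ω' | σ ω' = n}, f (X N ω) ∂P := by
      intro n hn
      have hnN : n ≤ N := Nat.lt_succ_iff.mp (Finset.mem_range.mp hn)
      calc ∫ ω in {ω' | σ ω' = n}, f (X n ω) ∂P
          = ∫ ω in {ω' | σ ω' = n}, (P[(fun ω => f (X n ω)) | ℱ n]) ω ∂P :=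
            (setIntegral_condExp (ℱ.le n) (hint n) (hset n)).symm
        _ = ∫ ω in {ω' | σ ω' = n},
              (P[P[(fun ω => f (X N ω)) | ℱ N] | ℱ n]) ω ∂P :=
            (setIntegral_congr_ae (hsetm n)
              ((hmg.condExp_ae_eq hnN).mono fun ω hω _ => hω)).symm
        _ = ∫ ω in {ω' | σ ω' = n}, (P[(fun ω => f (X N ω)) | ℱ N]) ω ∂P :=
            setIntegral_condExp (ℱ.le n) integrable_condExp (hset n)
        _ = ∫ ω in {ω' | σ ω' = n}, f (X N ω) ∂P :=
            setIntegral_condExp (ℱ.le N) (hint N) ((ℱ.mono hnN) _ (hset n))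
    calc ∫ ω, f (X (σ ω) ω) ∂P
        = ∫ ω, ∑ n ∈ Finset.range (N + 1),
            Set.indicator {ω' | σ ω' = n} (fun ω' => f (X n ω')) ω ∂P := by
          refine integral_congr_ae (Filter.Eventually.of_forall fun ω => ?_)
          exact (hsum (fun n ω' => f (X n ω')) ω).symm
      _ = ∑ n ∈ Finset.range (N + 1),
            ∫ ω, Set.indicator {ω' | σ ω' = n} (fun ω' => f (X n ω')) ω ∂P :=
          integral_finset_sum _ (fun n _ => (hint n).indicator (hsetm n))
      _ = ∑ n ∈ Finset.range (N + 1), ∫ ω in {ω' | σ ω' = n}, f (X n ω) ∂P :=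
          Finset.sum_congr rfl fun n _ => integral_indicator (hsetm n)
      _ = ∑ n ∈ Finset.range (N + 1), ∫ ω in {ω' | σ ω' = n}, f (X N ω) ∂P :=
          Finset.sum_congr rfl hterm
      _ = ∑ n ∈ Finset.range (N + 1),
            ∫ ω, Set.indicator {ω' | σ ω' = n} (fun ω' => f (X N ω')) ω ∂P :=
          Finset.sum_congr rfl fun n _ => (integral_indicator (hsetm n)).symm
      _ = ∫ ω, ∑ n ∈ Finset.range (N + 1),
            Set.indicator {ω' | σ ω' = n} (fun ω' => f (X N ω')) ω ∂P :=
          (integral_finset_sum _ (fun n _ => (hint N).indicator (hsetm n))).symm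
      _ = ∫ ω, f (X N ω) ∂P := by
          refine integral_congr_ae (Filter.Eventually.of_forall fun ω => ?_)
          exact hsum (fun _ ω' => f (X N ω')) ω
  -- E[f(X N)] = E[f(X 0)]
  have hconst : ∀ N : ℕ, ∫ ω, f (X N ω) ∂P = ∫ ω, f (X 0 ω) ∂P := by
    intro N
    calc ∫ ω, f (X N ω) ∂P
        = ∫ ω, (P[(fun ω => f (X N ω)) | ℱ N]) ω ∂P := (integral_condExp (ℱ.le N)).symm
      _ = ∫ ω, (P[P[(fun ω => f (X N ω)) | ℱ N] | ℱ 0]) ω ∂P :=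
          (integral_condExp (ℱ.le 0)).symm
      _ = ∫ ω, (P[(fun ω => f (X 0 ω)) | ℱ 0]) ω ∂P :=
          integral_congr_ae (hmg.condExp_ae_eq (Nat.zero_le N))
      _ = ∫ ω, f (X 0 ω) ∂P := integral_condExp (ℱ.le 0)
  -- measurability of stopped processes
  have hτm : Measurable τ :=
    measurable_to_countable' fun n => ℱ.le n _ (by exact (by simpa using hτ.measurableSet_eq n : MeasurableSet[ℱ n] {ω | τ ω = n}))
  have hXτm : Measurable fun ω => X (τ ω) ω := cid_aux_stopped_meas hadapt hτm
  have hminm : ∀ N : ℕ, Measurable fun ω => X (min (τ ω) N) ω :=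
    fun N => cid_aux_stopped_meas hadapt (hτm.min measurable_const)
  -- each truncated stopping time gives E[f(X 0)]
  have hNbd : ∀ N : ℕ, ∫ ω, f (X (min (τ ω) N) ω) ∂P = ∫ ω, f (X 0 ω) ∂P := by
    intro N
    rw [key (fun ω => min (τ ω) N) (by
      convert hτ.min_const N using 2 with ω
      case e'_6 => exact WithTop.coe_min _ _
      case e'_4 => rfl) N (fun ω => min_le_right _ _)]
    exact hconst N
  -- dominated convergence
  have htend : Tendsto (fun N => ∫ ω, f (X (min (τ ω) N) ω) ∂P) atTop
      (𝓝 (∫ ω, f (X (τ ω) ω) ∂P)) := by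
    refine tendsto_integral_of_dominated_convergence (fun _ => C)
      (fun N => (hf.comp (hminm N)).aestronglyMeasurable)
      (integrable_const C) (fun N => Filter.Eventually.of_forall fun ω => ?_)
      (Filter.Eventually.of_forall fun ω => ?_)
    · simpa [Real.norm_eq_abs] using hC (X (min (τ ω) N) ω)
    · refine tendsto_const_nhds.congr' ?_
      filter_upwards [eventually_ge_atTop (τ ω)] with N hN
      rw [min_eq_left hN]
  simp only [hNbd] at htend
  exact tendsto_nhds_unique htend tendsto_const_nhds

/-- Condition (ii) implies condition (iii). -/
lemma mg_to_st (hadapt : ∀ n, Measurable[ℱ (n + 1)] (X n))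
    (h : ∀ f : E → ℝ, Measurable f → (∃ C, ∀ x, |f x| ≤ C) →
        Martingale (fun n => P[(fun ω => f (X n ω)) | ℱ n]) ℱ P)
    {τ : Ω → ℕ} (hτ : IsStoppingTime ℱ (fun ω => (τ ω : WithTop ℕ))) :
    Measure.map (fun ω => X (τ ω) ω) P = Measure.map (X 0) P := by
  have hXm := cid_aux_measX hadapt
  have hτm : Measurable τ :=
    measurable_to_countable' fun n => ℱ.le n _ (by exact (by simpa using hτ.measurableSet_eq n : MeasurableSet[ℱ n] {ω | τ ω = n}))
  have hXτm : Measurable fun ω => X (τ ω) ω := cid_aux_stopped_meas hadapt hτm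
  ext s hs
  rw [Measure.map_apply hXτm hs, Measure.map_apply (hXm 0) hs]
  have hind : Measurable (s.indicator fun _ => (1 : ℝ)) := measurable_const.indicator hs
  have hbd : ∀ x, |s.indicator (fun _ => (1 : ℝ)) x| ≤ 1 := by
    intro x
    by_cases hx : x ∈ s <;> simp [Set.indicator_apply, hx]
  have h1 := mg_int_stopped hadapt h hind hbd hτ
  have e1 : ∀ (g : Ω → E), Measurable g →
      ∫ ω, s.indicator (fun _ => (1 : ℝ)) (g ω) ∂P = (P (g ⁻¹' s)).toReal := by
    intro g hg
    have : (fun ω => s.indicator (fun _ => (1 : ℝ)) (g ω))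
        = (g ⁻¹' s).indicator fun _ => (1 : ℝ) := by
      ext ω
      by_cases hω : g ω ∈ s <;> simp [Set.indicator_apply, hω]
    rw [this, integral_indicator_const (1 : ℝ) (hg hs), smul_eq_mul, mul_one]
    rfl
  rw [e1 _ hXτm, e1 _ (hXm 0)] at h1
  exact (ENNReal.toReal_eq_toReal_iff' (measure_ne_top P _) (measure_ne_top P _)).mp h1

/-- Condition (iii) implies the one-step version of (i). -/
lemma st_to_step (hadapt : ∀ n, Measurable[ℱ (n + 1)] (X n))
    (h : ∀ τ : Ω → ℕ, IsStoppingTime ℱ (fun ω => (τ ω : WithTop ℕ)) →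
        Measure.map (fun ω => X (τ ω) ω) P = Measure.map (X 0) P) :
    ∀ (n : ℕ) (f : E → ℝ), Measurable f → (∃ C, ∀ x, |f x| ≤ C) →
        P[(fun ω => f (X (n + 1) ω)) | ℱ n] =ᵐ[P] P[(fun ω => f (X n ω)) | ℱ n] := by
  classical
  intro n f hf hCex
  obtain ⟨C, hC⟩ := hCex
  have hXm := cid_aux_measX hadapt
  have hint : ∀ m, Integrable (fun ω => f (X m ω)) P := cid_aux_int hadapt hf hC
  -- all the X m have the same law
  have hconstlaw : ∀ m : ℕ, ∫ ω, f (X m ω) ∂P = ∫ ω, f (X 0 ω) ∂P := by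
    intro m
    have hmap := h (fun _ => m) (isStoppingTime_const ℱ m)
    calc ∫ ω, f (X m ω) ∂P
        = ∫ x, f x ∂(Measure.map (fun ω => X ((fun _ : Ω => m) ω) ω) P) :=
          (integral_map (hXm m).aemeasurable hf.aestronglyMeasurable).symm
      _ = ∫ x, f x ∂(Measure.map (X 0) P) := by rw [hmap]
      _ = ∫ ω, f (X 0 ω) ∂P := integral_map (hXm 0).aemeasurable hf.aestronglyMeasurable
  -- set-integral equality on ℱ n sets
  have hseteq : ∀ A : Set Ω, MeasurableSet[ℱ n] A →
      ∫ ω in A, f (X (n + 1) ω) ∂P = ∫ ω in A, f (X n ω) ∂P := by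
    intro A hA
    have hAm : MeasurableSet A := ℱ.le n _ hA
    set σ : Ω → ℕ := fun ω => if ω ∈ A then n + 1 else n with hσdef
    have hσ : IsStoppingTime ℱ (fun ω => (σ ω : WithTop ℕ)) := by
      intro m
      suffices MeasurableSet[ℱ m] {ω | σ ω ≤ m} by
        convert this using 1; ext ω; simp
      rcases lt_or_ge m n with hm | hm
      · have hempty : {ω | σ ω ≤ m} = ∅ := by
          ext ω
          simp only [Set.mem_setOf_eq, Set.mem_empty_iff_false, iff_false, hσdef]
          by_cases hω : ω ∈ A
          · simp only [if_pos hω]; omega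
          · simp only [if_neg hω]; omega
        rw [hempty]
        exact @MeasurableSet.empty _ (ℱ m)
      rcases lt_or_ge m (n + 1) with hm1 | hm1
      · have hcompl : {ω | σ ω ≤ m} = Aᶜ := by
          ext ω
          simp only [Set.mem_setOf_eq, Set.mem_compl_iff, hσdef]
          by_cases hω : ω ∈ A
          · rw [if_pos hω]; simp only [hω, not_true_eq_false, iff_false]; omega
          · rw [if_neg hω]; simp only [hω, not_false_eq_true, iff_true]; omega
        rw [hcompl]
        exact (ℱ.mono hm) _ hA.compl
      · have huniv : {ω | σ ω ≤ m} = Set.univ := by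
          ext ω
          simp only [Set.mem_setOf_eq, Set.mem_univ, iff_true, hσdef]
          by_cases hω : ω ∈ A
          · simp only [if_pos hω]; omega
          · simp only [if_neg hω]; omega
        rw [huniv]
        exact MeasurableSet.univ
    have hσm : Measurable σ :=
      measurable_to_countable' fun k => ℱ.le k _ (by exact (by simpa using hσ.measurableSet_eq k : MeasurableSet[ℱ k] {ω | σ ω = k}))
    have hXσm : Measurable fun ω => X (σ ω) ω := cid_aux_stopped_meas hadapt hσm
    have hintσ : Integrable (fun ω => f (X (σ ω) ω)) P := by
      refine Integrable.mono' (integrable_const C)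
        ((hf.comp hXσm).aestronglyMeasurable) ?_
      exact Filter.Eventually.of_forall fun ω => by
        simpa [Real.norm_eq_abs] using hC (X (σ ω) ω)
    have hlawσ : ∫ ω, f (X (σ ω) ω) ∂P = ∫ ω, f (X 0 ω) ∂P := by
      have hmap := h σ hσ
      calc ∫ ω, f (X (σ ω) ω) ∂P
          = ∫ x, f x ∂(Measure.map (fun ω => X (σ ω) ω) P) :=
            (integral_map hXσm.aemeasurable hf.aestronglyMeasurable).symm
        _ = ∫ x, f x ∂(Measure.map (X 0) P) := by rw [hmap]
        _ = ∫ ω, f (X 0 ω) ∂P := integral_map (hXm 0).aemeasurable hf.aestronglyMeasurable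
    have hsplitσ : ∫ ω in A, f (X (σ ω) ω) ∂P + ∫ ω in Aᶜ, f (X (σ ω) ω) ∂P
        = ∫ ω, f (X (σ ω) ω) ∂P := integral_add_compl hAm hintσ
    have hsplitn : ∫ ω in A, f (X n ω) ∂P + ∫ ω in Aᶜ, f (X n ω) ∂P
        = ∫ ω, f (X n ω) ∂P := integral_add_compl hAm (hint n)
    have hA1 : ∫ ω in A, f (X (σ ω) ω) ∂P = ∫ ω in A, f (X (n + 1) ω) ∂P := by
      refine setIntegral_congr_fun hAm fun ω hω => ?_
      simp only [hσdef, if_pos hω]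
    have hA2 : ∫ ω in Aᶜ, f (X (σ ω) ω) ∂P = ∫ ω in Aᶜ, f (X n ω) ∂P := by
      refine setIntegral_congr_fun hAm.compl fun ω hω => ?_
      simp only [hσdef, if_neg hω]
    have hXn0 : ∫ ω, f (X n ω) ∂P = ∫ ω, f (X 0 ω) ∂P := hconstlaw n
    rw [hA1, hA2] at hsplitσ
    rw [hlawσ, ← hXn0, ← hsplitn] at hsplitσ
    linarith
  refine ae_eq_of_forall_setIntegral_eq_of_sigmaFinite' (ℱ.le n)
    (fun s _ _ => integrable_condExp.integrableOn)
    (fun s _ _ => integrable_condExp.integrableOn)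
    (fun s hs _ => ?_)
    stronglyMeasurable_condExp.aestronglyMeasurable
    stronglyMeasurable_condExp.aestronglyMeasurable
  rw [setIntegral_condExp (ℱ.le n) (hint (n + 1)) hs,
    setIntegral_condExp (ℱ.le n) (hint n) hs]
  exact hseteq s hs

end CidAux

/-- Equivalent characterizations of conditionally identically distributed (c.i.d.)
sequences with respect to a filtration `ℱ`.  Here `X n` stands for the observation
`X_{n+1}` of the paper, so that `X n` is `ℱ (n+1)`-measurable and the predictive
distribution of `X n` is taken given `ℱ n`.  The three conditions are:
(i) `E[f(X_{n+k}) | ℱ_n] = E[f(X_{n+1}) | ℱ_n]` for all `k ≥ 1`, `n ≥ 0`;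
(ii) `(E[f(X_{n+1}) | ℱ_n])_n` is a `ℱ`-martingale for every bounded measurable `f`;
(iii) `X_{τ+1}` has the same law as `X_1` for every (finite) stopping time `τ`. -/
theorem cid_iff_martingale_iff_stoppingTime
    {Ω E : Type*} {mΩ : MeasurableSpace Ω} [MeasurableSpace E]
    [TopologicalSpace E] [PolishSpace E] [BorelSpace E]
    (P : Measure Ω) [IsProbabilityMeasure P]
    (ℱ : Filtration ℕ mΩ)
    (X : ℕ → Ω → E) (hadapt : ∀ n, Measurable[ℱ (n + 1)] (X n)) :
    ((∀ (n k : ℕ) (f : E → ℝ), Measurable f → (∃ C, ∀ x, |f x| ≤ C) →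
        P[(fun ω => f (X (n + k) ω)) | ℱ n] =ᵐ[P] P[(fun ω => f (X n ω)) | ℱ n]) ↔
      (∀ f : E → ℝ, Measurable f → (∃ C, ∀ x, |f x| ≤ C) →
        Martingale (fun n => P[(fun ω => f (X n ω)) | ℱ n]) ℱ P)) ∧
    ((∀ (n k : ℕ) (f : E → ℝ), Measurable f → (∃ C, ∀ x, |f x| ≤ C) →
        P[(fun ω => f (X (n + k) ω)) | ℱ n] =ᵐ[P] P[(fun ω => f (X n ω)) | ℱ n]) ↔
      (∀ τ : Ω → ℕ, IsStoppingTime ℱ (fun ω => (τ ω : WithTop ℕ)) →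
        Measure.map (fun ω => X (τ ω) ω) P = Measure.map (X 0) P)) := by
  refine ⟨⟨fun h f hf hC => cid_to_mg hadapt h hf hC, mg_to_cid hadapt⟩,
    ⟨fun h τ hτ => mg_to_st hadapt (fun f hf hC => cid_to_mg hadapt h hf hC) hτ,
      fun h => step_to_cid hadapt (st_to_step hadapt h)⟩⟩
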